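/- Let Γ be a countable discrete group with a measurable action on a measure space (X,ν), and let Y ⊆ X be a domain. Then: (1) Y is a domain of expansion if and only if for every c ∈ (0,1) there exists a finite symmetric subset S ⊆ Γ with 1 ∈ S such that ν((S·A) ∩ Y) > (1+c)·ν(A) for every measurable A ⊆ Y with 0 < ν(A) ≤ ν(Y)/2; and (2) Y is a domain of asymptotic expansion if and only if for every c ∈ (0,1) and every α ∈ (0,1/2] there exists a finite symmetric subset S_α ⊆ Γ with 1 ∈ S_α such that ν((S_α·A) ∩ Y) > (1+c)·ν(A) for every measurable A ⊆ Y with α·ν(Y) ≤ ν(A) ≤ ν(Y)/2. -/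

import Mathlib

open MeasureTheory Set Filter Pointwise

/-- The union `S · A = ⋃ s ∈ S, s • A` of the translates of `A` by elements of the
finite set `S ⊆ Γ`. -/
def finSMul {Γ X : Type*} [Group Γ] [MulAction Γ X] (S : Finset Γ) (A : Set X) : Set X :=
  ⋃ s ∈ S, s • A

/-- `S` is a finite symmetric subset of `Γ` containing the identity. -/
def SymmFin {Γ : Type*} [Group Γ] (S : Finset Γ) : Prop :=
  (1 : Γ) ∈ S ∧ ∀ s ∈ S, s⁻¹ ∈ S

/-- The `S`-boundary `∂_S A = (S·A) \ A`. -/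
def finBdry {Γ X : Type*} [Group Γ] [MulAction Γ X] (S : Finset Γ) (A : Set X) : Set X :=
  finSMul S A \ A

/-- `Y` is a domain of `(c,S)`-expansion: `ν((S·A) ∩ Y) > (1+c)·ν(A)` for every
measurable `A ⊆ Y` with `0 < ν(A) ≤ ν(Y)/2`. -/
def ExpandsOn {Γ X : Type*} [Group Γ] [MulAction Γ X] [MeasurableSpace X]
    (ν : MeasureTheory.Measure X) (Y : Set X) (c : ℝ) (S : Finset Γ) : Prop :=
  ∀ A : Set X, MeasurableSet A → A ⊆ Y → 0 < ν A → ν A ≤ ν Y / 2 →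
    (1 + ENNReal.ofReal c) * ν A < ν (finSMul S A ∩ Y)

/-- `Y` is a domain of expansion: `(c,S)`-expansion for some `c > 0` and some finite
symmetric `S ∋ 1`. -/
def ExpDomain (Γ : Type*) {X : Type*} [Group Γ] [MulAction Γ X] [MeasurableSpace X]
    (ν : MeasureTheory.Measure X) (Y : Set X) : Prop :=
  ∃ c : ℝ, 0 < c ∧ ∃ S : Finset Γ, SymmFin S ∧ ExpandsOn ν Y c S

/-- The `(α,c,S)` asymptotic-expansion estimate on `Y`: `ν((S·A) ∩ Y) > (1+c)·ν(A)` for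
every measurable `A ⊆ Y` with `α·ν(Y) ≤ ν(A) ≤ ν(Y)/2`. -/
def AsymExpandsOn {Γ X : Type*} [Group Γ] [MulAction Γ X] [MeasurableSpace X]
    (ν : MeasureTheory.Measure X) (Y : Set X) (α c : ℝ) (S : Finset Γ) : Prop :=
  ∀ A : Set X, MeasurableSet A → A ⊆ Y → ENNReal.ofReal α * ν Y ≤ ν A → ν A ≤ ν Y / 2 →
    (1 + ENNReal.ofReal c) * ν A < ν (finSMul S A ∩ Y)

/-- `Y` is a domain of asymptotic expansion. -/
def AsymExpDomain (Γ : Type*) {X : Type*} [Group Γ] [MulAction Γ X] [MeasurableSpace X]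
    (ν : MeasureTheory.Measure X) (Y : Set X) : Prop :=
  ∀ α : ℝ, 0 < α → α ≤ 1 / 2 →
    ∃ c : ℝ, 0 < c ∧ ∃ S : Finset Γ, SymmFin S ∧ AsymExpandsOn ν Y α c S

/-- The action of `Γ` on the probability space `(X,ν)` is strongly ergodic: every almost
invariant sequence of measurable sets is asymptotically trivial. -/
def StronglyErgodic (Γ : Type*) {X : Type*} [Group Γ] [MulAction Γ X] [MeasurableSpace X]
    (ν : MeasureTheory.Measure X) : Prop :=
  ∀ C : ℕ → Set X, (∀ n, MeasurableSet (C n)) →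
    (∀ γ : Γ, Filter.Tendsto (fun n => ν (symmDiff (C n) (γ • C n))) Filter.atTop (nhds 0)) →
    Filter.Tendsto (fun n => ν (C n) * (1 - ν (C n))) Filter.atTop (nhds 0)

/-- The action of `Γ` on `(X,ν)` is measure-class-preserving. -/
def MeasClassPres (Γ : Type*) {X : Type*} [Group Γ] [MulAction Γ X] [MeasurableSpace X]
    (ν : MeasureTheory.Measure X) : Prop :=
  ∀ (γ : Γ) (A : Set X), MeasurableSet A → (ν (γ • A) = 0 ↔ ν A = 0)

/-- The action of `Γ` on `(X,ν)` is ergodic: every invariant measurable set is null or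
conull. -/
def ErgodicAct (Γ : Type*) {X : Type*} [Group Γ] [MulAction Γ X] [MeasurableSpace X]
    (ν : MeasureTheory.Measure X) : Prop :=
  ∀ A : Set X, MeasurableSet A → (∀ γ : Γ, γ • A = A) → ν A = 0 ∨ ν Aᶜ = 0

/-- `W` admits an exhaustion by measurable subsets satisfying `P`. -/
def ExhaustionBy {X : Type*} [MeasurableSpace X] (ν : MeasureTheory.Measure X)
    (W : Set X) (P : Set X → Prop) : Prop :=
  ∃ Y : ℕ → Set X, Monotone Y ∧ (∀ n, MeasurableSet (Y n)) ∧ (∀ n, Y n ⊆ W) ∧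
    (∀ n, P (Y n)) ∧ ν (W \ ⋃ n, Y n) = 0


open scoped ENNReal

section Aux
variable {Γ X : Type*} [Group Γ] [MulAction Γ X]

lemma finSMul_mono {S : Finset Γ} {A B : Set X} (h : A ⊆ B) : finSMul S A ⊆ finSMul S B :=
  Set.iUnion₂_mono fun _ _ => Set.smul_set_mono h

lemma subset_finSMul {S : Finset Γ} (h1 : (1:Γ) ∈ S) (A : Set X) : A ⊆ finSMul S A :=
  fun x hx => Set.mem_biUnion h1 (by simpa using hx)

lemma finSMul_finSMul [DecidableEq Γ] {S T : Finset Γ} (A : Set X) :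
    finSMul S (finSMul T A) ⊆ finSMul (S * T) A := by
  intro x hx
  simp only [finSMul, Set.mem_iUnion] at hx ⊢
  obtain ⟨s, hs, hx⟩ := hx
  obtain ⟨y, hy, rfl⟩ := hx
  simp only [Set.mem_iUnion] at hy
  obtain ⟨t, ht, z, hz, rfl⟩ := hy
  exact ⟨s * t, Finset.mul_mem_mul hs ht, z, hz, (mul_smul s t z)⟩

lemma symmFin_pow [DecidableEq Γ] {S : Finset Γ} (hS : SymmFin S) (n : ℕ) :
    SymmFin (S ^ n) := by
  induction n with
  | zero => refine ⟨by simp, fun s hs => ?_⟩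
            simp only [pow_zero, Finset.mem_one] at hs ⊢; simp [hs]
  | succ n ih =>
    constructor
    · rw [pow_succ]
      simpa using Finset.mul_mem_mul ih.1 hS.1
    · intro s hs
      rw [pow_succ, Finset.mem_mul] at hs
      obtain ⟨a, ha, b, hb, rfl⟩ := hs
      rw [pow_succ', mul_inv_rev]
      exact Finset.mul_mem_mul (hS.2 b hb) (ih.2 a ha)

lemma pow_subset_pow_finset [DecidableEq Γ] {S : Finset Γ} (h1 : (1:Γ) ∈ S) {n m : ℕ}
    (hnm : n ≤ m) : (S ^ n : Finset Γ) ⊆ S ^ m := by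
  induction hnm with
  | refl => exact subset_rfl
  | step h ih => rename_i k hk
                 intro x hx
                 rw [pow_succ]
                 simpa using Finset.mul_mem_mul (ih hx) h1

lemma smul_set_measurableSet [MeasurableSpace X]
    (hmeas : ∀ γ : Γ, Measurable fun x : X => γ • x) {A : Set X} (hA : MeasurableSet A)
    (s : Γ) : MeasurableSet (s • A) := by
  have : s • A = (fun x : X => s⁻¹ • x) ⁻¹' A := by
    ext x; simp [Set.mem_smul_set_iff_inv_smul_mem]
  rw [this]; exact (hmeas s⁻¹) hA

lemma finSMul_measurableSet [MeasurableSpace X]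
    (hmeas : ∀ γ : Γ, Measurable fun x : X => γ • x) {A : Set X} (hA : MeasurableSet A)
    (S : Finset Γ) : MeasurableSet (finSMul S A) :=
  MeasurableSet.biUnion S.countable_toSet fun s _ => smul_set_measurableSet hmeas hA s

/-- key complement inclusion -/
lemma finSMul_compl_subset {S : Finset Γ} (hS : ∀ s ∈ S, s⁻¹ ∈ S) (A Y : Set X) :
    finSMul S (Y \ (finSMul S A ∩ Y)) ∩ Y ⊆ Y \ A := by
  rintro x ⟨hx1, hxY⟩
  refine ⟨hxY, fun hxA => ?_⟩
  simp only [finSMul, Set.mem_iUnion] at hx1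
  obtain ⟨s, hs, b, hb, rfl⟩ := hx1
  have hbA : b ∈ finSMul S A := by
    have : s⁻¹ • (s • b) ∈ s⁻¹ • A := Set.smul_mem_smul_set hxA
    rw [inv_smul_smul] at this
    exact Set.mem_biUnion (hS s hs) this
  exact hb.2 ⟨hbA, hb.1⟩

end Aux

section Boost
variable {Γ X : Type*} [Group Γ] [MulAction Γ X] [MeasurableSpace X]

lemma endgame_bound {ν : Measure X} {Y A D : Set X} {c' : ℝ} (hc'0 : 0 < c') (hc'1 : c' < 1)
    (hYfin : ν Y < ⊤) (hA2 : ν A ≤ ν Y / 2) (hD : D ⊆ Y)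
    (hB : ν (Y \ D) < ENNReal.ofReal ((1 - c') / 2) * ν Y) :
    (1 + ENNReal.ofReal c') * ν A < ν D := by
  have hsub : ν Y - ν (Y \ D) ≤ ν D := by
    have h1 : Y \ (Y \ D) = D := Set.diff_diff_cancel_left hD
    calc ν Y - ν (Y \ D) ≤ ν (Y \ (Y \ D)) := le_measure_diff
      _ = ν D := by rw [h1]
  refine lt_of_lt_of_le ?_ hsub
  rw [lt_tsub_iff_right]
  have ha : (1 + ENNReal.ofReal c') * ν A ≤ ENNReal.ofReal ((1 + c') / 2) * ν Y := by
    have e1 : (1 : ℝ≥0∞) + ENNReal.ofReal c' = ENNReal.ofReal (1 + c') := by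
      rw [ENNReal.ofReal_add zero_le_one hc'0.le, ENNReal.ofReal_one]
    have e2 : ENNReal.ofReal ((1 + c') / 2) = ENNReal.ofReal (1 + c') / 2 := by
      rw [ENNReal.ofReal_div_of_pos (by norm_num)]
      norm_num
    calc (1 + ENNReal.ofReal c') * ν A ≤ (1 + ENNReal.ofReal c') * (ν Y / 2) :=
          mul_le_mul_right hA2 _
      _ = ENNReal.ofReal ((1 + c') / 2) * ν Y := by
          rw [e1, e2, ENNReal.div_eq_inv_mul, ENNReal.div_eq_inv_mul]; ring
  have hfin : ENNReal.ofReal ((1 + c') / 2) * ν Y ≠ ⊤ :=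
    ENNReal.mul_ne_top ENNReal.ofReal_ne_top hYfin.ne
  calc (1 + ENNReal.ofReal c') * ν A + ν (Y \ D)
      ≤ ENNReal.ofReal ((1 + c') / 2) * ν Y + ν (Y \ D) := add_le_add_left ha _
    _ < ENNReal.ofReal ((1 + c') / 2) * ν Y + ENNReal.ofReal ((1 - c') / 2) * ν Y :=
        ENNReal.add_lt_add_left hfin hB
    _ = ν Y := by
        rw [← add_mul, ← ENNReal.ofReal_add (by linarith) (by linarith),
          show (1 + c') / 2 + (1 - c') / 2 = 1 by ring, ENNReal.ofReal_one, one_mul]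

lemma boost [DecidableEq Γ] (ν : Measure X)
    (hmeas : ∀ γ : Γ, Measurable fun x : X => γ • x)
    (Y : Set X) (hYm : MeasurableSet Y) (hY0 : 0 < ν Y) (hYfin : ν Y < ⊤)
    {c c' : ℝ} (hc : 0 < c) (hc'0 : 0 < c') (hc'1 : c' < 1)
    {S : Finset Γ} (hS : SymmFin S)
    (P : ℝ≥0∞ → Prop) (hPmono : ∀ x y, P x → x ≤ y → P y)
    (hPpos : ∀ x, P x → 0 < x)
    (hPfail : ∀ x, ¬ P x → x < ENNReal.ofReal ((1 - c') / 2) * ν Y)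
    (H : ∀ A : Set X, MeasurableSet A → A ⊆ Y → P (ν A) → ν A ≤ ν Y / 2 →
      (1 + ENNReal.ofReal c) * ν A < ν (finSMul S A ∩ Y)) :
    ∃ T : Finset Γ, SymmFin T ∧ ∀ A : Set X, MeasurableSet A → A ⊆ Y → P (ν A) →
      ν A ≤ ν Y / 2 → (1 + ENNReal.ofReal c') * ν A < ν (finSMul T A ∩ Y) := by
  -- choose exponents
  obtain ⟨k, hk⟩ : ∃ k : ℕ, (2 : ℝ) < (1 + c) ^ k :=
    pow_unbounded_of_one_lt 2 (by linarith)
  obtain ⟨m, hm⟩ : ∃ m : ℕ, 2 / (1 - c') < (1 + c) ^ m :=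
    pow_unbounded_of_one_lt _ (by linarith)
  refine ⟨S ^ (k + m), symmFin_pow hS (k + m), ?_⟩
  intro A hAm hAY hPA hA2
  -- the iterated sets
  set f : Set X → Set X := fun B => finSMul S B ∩ Y with hf
  set Aseq : ℕ → Set X := fun n => f^[n] A with hAseq
  have hseq0 : Aseq 0 = A := rfl
  have hseqsucc : ∀ n, Aseq (n + 1) = finSMul S (Aseq n) ∩ Y := fun n =>
    Function.iterate_succ_apply' f n A
  have hmeasn : ∀ n, MeasurableSet (Aseq n) := by
    intro n; induction n with
    | zero => exact hAm
    | succ n ih => rw [hseqsucc]; exact (finSMul_measurableSet hmeas ih S).inter hYm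
  have hsubY : ∀ n, Aseq n ⊆ Y := by
    intro n; cases n with
    | zero => exact hAY
    | succ n => rw [hseqsucc]; exact Set.inter_subset_right
  have hmono : Monotone Aseq := by
    apply monotone_nat_of_le_succ
    intro n
    rw [hseqsucc]
    exact Set.subset_inter (subset_finSMul hS.1 _) (hsubY n)
  have hsubpow : ∀ n, Aseq n ⊆ finSMul (S ^ n) A := by
    intro n; induction n with
    | zero => rw [hseq0, pow_zero]; exact subset_finSMul (by simp) A
    | succ n ih =>
      rw [hseqsucc, pow_succ']
      exact Set.inter_subset_left.trans ((finSMul_mono ih).trans (finSMul_finSMul A))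
  have hApos : 0 < ν A := hPpos _ hPA
  have hAfin : ν A < ⊤ := lt_of_le_of_lt hA2 (lt_of_le_of_lt (ENNReal.half_le_self) hYfin)
  -- main claim
  have claim : ∃ n ≤ k + m, (1 + ENNReal.ofReal c') * ν A < ν (Aseq n) := by
    by_cases hhalf : ∀ j < k, ν (Aseq j) ≤ ν Y / 2
    · -- climbing phase succeeds for k steps
      have climb : ∀ n ≤ k, (1 + ENNReal.ofReal c) ^ n * ν A ≤ ν (Aseq n) := by
        intro n hn; induction n with
        | zero => simp [hseq0]
        | succ n ih =>
          have hn' : n < k := Nat.lt_of_succ_le hn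
          have ih' := ih hn'.le
          have hstep := H (Aseq n) (hmeasn n) (hsubY n)
            (hPmono _ _ hPA (measure_mono (hmono (Nat.zero_le n)))) (hhalf n hn')
          rw [← hseqsucc] at hstep
          calc (1 + ENNReal.ofReal c) ^ (n + 1) * ν A
              = (1 + ENNReal.ofReal c) * ((1 + ENNReal.ofReal c) ^ n * ν A) := by ring
            _ ≤ (1 + ENNReal.ofReal c) * ν (Aseq n) := mul_le_mul_right ih' _
            _ ≤ ν (Aseq (n + 1)) := hstep.le
      refine ⟨k, Nat.le_add_right k m, ?_⟩
      have h2 : (2 : ℝ≥0∞) * ν A ≤ (1 + ENNReal.ofReal c) ^ k * ν A := by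
        apply mul_le_mul_left
        have : ((2 : ℝ≥0∞)) ≤ ENNReal.ofReal ((1 + c) ^ k) := by
          rw [show ((2:ℝ≥0∞)) = ENNReal.ofReal 2 by norm_num]
          exact ENNReal.ofReal_le_ofReal hk.le
        rwa [ENNReal.ofReal_pow (by linarith), ENNReal.ofReal_add zero_le_one hc.le,
          ENNReal.ofReal_one] at this
      have hlt : (1 + ENNReal.ofReal c') * ν A < 2 * ν A := by
        rw [ENNReal.mul_lt_mul_iff_left hApos.ne' hAfin.ne]
        calc (1 : ℝ≥0∞) + ENNReal.ofReal c' < 1 + 1 := by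
              exact ENNReal.add_lt_add_left (by norm_num) (ENNReal.ofReal_lt_one.mpr hc'1)
          _ = 2 := one_add_one_eq_two
      exact hlt.trans_le (h2.trans (climb k le_rfl))
    · -- crossed half at some j < k
      push_neg at hhalf
      obtain ⟨j, hjk, hj⟩ := hhalf
      set B : ℕ → Set X := fun i => Y \ Aseq (j + i) with hB
      have hBm : ∀ i, MeasurableSet (B i) := fun i => hYm.diff (hmeasn (j + i))
      have hBY : ∀ i, B i ⊆ Y := fun i => Set.diff_subset
      have hBanti : ∀ i i', i ≤ i' → B i' ⊆ B i := fun i i' h =>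
        Set.diff_subset_diff_right (hmono (by omega))
      have hB0 : ν (B 0) ≤ ν Y / 2 := by
        have : ν (B 0) = ν Y - ν (Aseq (j + 0)) :=
          measure_diff (hsubY _) (hmeasn _).nullMeasurableSet
            (lt_of_le_of_lt (measure_mono (hsubY _)) hYfin).ne
        rw [this]
        calc ν Y - ν (Aseq (j + 0)) ≤ ν Y - ν Y / 2 :=
              tsub_le_tsub_left (by simpa using hj.le) _
          _ = ν Y / 2 := ENNReal.sub_half hYfin.ne
      have hBhalf : ∀ i, ν (B i) ≤ ν Y / 2 := fun i =>
        (measure_mono (hBanti 0 i (Nat.zero_le i))).trans hB0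
      by_cases hPB : ∀ i ≤ m, P (ν (B i))
      · -- shrink for m steps, get contradiction-derived bound
        have shrink : ∀ i ≤ m, (1 + ENNReal.ofReal c) ^ i * ν (B i) ≤ ν (B 0) := by
          intro i hi; induction i with
          | zero => simp
          | succ i ih =>
            have hstep := H (B (i + 1)) (hBm _) (hBY _) (hPB _ hi) (hBhalf _)
            have hincl : finSMul S (B (i + 1)) ∩ Y ⊆ B i := by
              have : B (i + 1) = Y \ (finSMul S (Aseq (j + i)) ∩ Y) := by
                rw [hB]; simp only [← hseqsucc, Nat.add_succ]
              rw [this]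
              exact finSMul_compl_subset hS.2 (Aseq (j + i)) Y
            have h1 : (1 + ENNReal.ofReal c) * ν (B (i + 1)) ≤ ν (B i) :=
              hstep.le.trans (measure_mono hincl)
            calc (1 + ENNReal.ofReal c) ^ (i + 1) * ν (B (i + 1))
                = (1 + ENNReal.ofReal c) ^ i * ((1 + ENNReal.ofReal c) * ν (B (i + 1))) := by
                  ring
              _ ≤ (1 + ENNReal.ofReal c) ^ i * ν (B i) := mul_le_mul_right h1 _
              _ ≤ ν (B 0) := ih (by omega)
        have hBm_small : ν (B m) < ENNReal.ofReal ((1 - c') / 2) * ν Y := by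
          by_contra hcon
          push_neg at hcon
          have h1 : ν Y ≤ (1 + ENNReal.ofReal c) ^ m * ν (B m) := by
            have e1 : (1 : ℝ≥0∞) ≤ (1 + ENNReal.ofReal c) ^ m * ENNReal.ofReal ((1 - c') / 2) := by
              have h2 : (2 : ℝ) < (1 + c) ^ m * (1 - c') :=
                (div_lt_iff₀ (by linarith)).mp hm
              have : (1 : ℝ) ≤ (1 + c) ^ m * ((1 - c') / 2) := by nlinarith
              calc (1 : ℝ≥0∞) = ENNReal.ofReal 1 := by norm_num
                _ ≤ ENNReal.ofReal ((1 + c) ^ m * ((1 - c') / 2)) :=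
                    ENNReal.ofReal_le_ofReal this
                _ = (1 + ENNReal.ofReal c) ^ m * ENNReal.ofReal ((1 - c') / 2) := by
                    rw [ENNReal.ofReal_mul (by positivity), ENNReal.ofReal_pow (by linarith),
                      ENNReal.ofReal_add zero_le_one hc.le, ENNReal.ofReal_one]
            calc ν Y = 1 * ν Y := (one_mul _).symm
              _ ≤ ((1 + ENNReal.ofReal c) ^ m * ENNReal.ofReal ((1 - c') / 2)) * ν Y :=
                  mul_le_mul_left e1 _
              _ = (1 + ENNReal.ofReal c) ^ m * (ENNReal.ofReal ((1 - c') / 2) * ν Y) := by ring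
              _ ≤ (1 + ENNReal.ofReal c) ^ m * ν (B m) := mul_le_mul_right hcon _
          have h2 : (1 + ENNReal.ofReal c) ^ m * ν (B m) ≤ ν Y / 2 :=
            (shrink m le_rfl).trans hB0
          exact absurd (h1.trans h2) (not_le.mpr (ENNReal.half_lt_self hY0.ne' hYfin.ne))
        refine ⟨j + m, by omega, ?_⟩
        exact endgame_bound hc'0 hc'1 hYfin hA2 (hsubY _) hBm_small
      · push_neg at hPB
        obtain ⟨i, him, hPBi⟩ := hPB
        refine ⟨j + i, by omega, ?_⟩
        exact endgame_bound hc'0 hc'1 hYfin hA2 (hsubY _) (hPfail _ hPBi)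
  obtain ⟨n, hn, hlt⟩ := claim
  refine hlt.trans_le (measure_mono ?_)
  calc Aseq n ⊆ Aseq (k + m) := hmono hn
    _ ⊆ finSMul (S ^ (k + m)) A ∩ Y :=
      Set.subset_inter (hsubpow (k + m)) (hsubY (k + m))

end Boost

/-- Lemma 3.9: for a domain `Y`, (1) `Y` is a domain of expansion iff
for every `c ∈ (0,1)` it is a domain of `(c,S)`-expansion for some finite symmetric
`S ∋ 1`, and (2) `Y` is a domain of asymptotic expansion iff for every `c ∈ (0,1)` and
every `α ∈ (0,1/2]` the `(α,c)` asymptotic-expansion estimate holds for some such `S`. -/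
theorem expDomain_and_asymExpDomain_arbitrary_constant
    {Γ X : Type*} [Group Γ] [Countable Γ] [MulAction Γ X] [MeasurableSpace X]
    (ν : Measure X)
    (hmeas : ∀ γ : Γ, Measurable fun x : X => γ • x)
    (Y : Set X) (hYm : MeasurableSet Y) (hY0 : 0 < ν Y) (hYfin : ν Y < ⊤) :
    (ExpDomain Γ ν Y ↔
      ∀ c : ℝ, 0 < c → c < 1 → ∃ S : Finset Γ, SymmFin S ∧ ExpandsOn ν Y c S) ∧
    (AsymExpDomain Γ ν Y ↔
      ∀ c : ℝ, 0 < c → c < 1 → ∀ α : ℝ, 0 < α → α ≤ 1 / 2 →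
        ∃ S : Finset Γ, SymmFin S ∧ AsymExpandsOn ν Y α c S) := by
  classical
  letI : DecidableEq Γ := Classical.decEq Γ
  constructor
  · constructor
    · rintro ⟨c, hc, S, hSsym, hexp⟩ c' hc'0 hc'1
      obtain ⟨T, hT, hTexp⟩ := boost ν hmeas Y hYm hY0 hYfin hc hc'0 hc'1 hSsym
        (fun x => 0 < x) (fun x y hx hxy => lt_of_lt_of_le hx hxy) (fun _ h => h)
        (fun x hx => by
          have hx0 : x = 0 := by simpa using hx
          rw [hx0]
          exact ENNReal.mul_pos (ENNReal.ofReal_pos.mpr (by linarith)).ne' hY0.ne')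
        hexp
      exact ⟨T, hT, hTexp⟩
    · intro h
      obtain ⟨S, hS, hE⟩ := h (1/2) (by norm_num) (by norm_num)
      exact ⟨1/2, by norm_num, S, hS, hE⟩
  · constructor
    · intro h c' hc'0 hc'1 α hα0 hα2
      set α₀ := min α ((1 - c') / 2) with hα₀
      have hα₀0 : 0 < α₀ := lt_min hα0 (by linarith)
      have hα₀2 : α₀ ≤ 1 / 2 := (min_le_left _ _).trans hα2
      obtain ⟨c, hc, S, hSsym, hexp⟩ := h α₀ hα₀0 hα₀2
      obtain ⟨T, hT, hTexp⟩ := boost ν hmeas Y hYm hY0 hYfin hc hc'0 hc'1 hSsym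
        (fun x => ENNReal.ofReal α₀ * ν Y ≤ x)
        (fun x y hx hxy => hx.trans hxy)
        (fun x hx => lt_of_lt_of_le
          (ENNReal.mul_pos (ENNReal.ofReal_pos.mpr hα₀0).ne' hY0.ne') hx)
        (fun x hx => lt_of_lt_of_le (not_le.mp hx)
          (mul_le_mul_left (ENNReal.ofReal_le_ofReal (min_le_right _ _)) _))
        hexp
      refine ⟨T, hT, fun A hAm hAY hlow hhigh => hTexp A hAm hAY ?_ hhigh⟩
      exact le_trans (mul_le_mul_left (ENNReal.ofReal_le_ofReal (min_le_left _ _)) _) hlow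
    · intro h α hα0 hα2
      obtain ⟨S, hS, hE⟩ := h (1/2) (by norm_num) (by norm_num) α hα0 hα2
      exact ⟨1/2, by norm_num, S, hS, hE⟩
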